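/- For every machine process P of the NFB translation, the set of weak observable actions of P w.r.t. H satisfies WkObs(P) ⊆ {lam, enter, skip, done, suc, z}; in particular no machine process has a weak barb on a coname. -/
import Mathlib


/-! ### HOcore: syntax, LTS, barbs, barbed bisimilarity -/

/-- Channel names of HOcore. -/
abbrev Name := ℕ

/-- HOcore processes, with de Bruijn indices for process variables. -/
inductive Proc : Type
  | nil : Proc
  | pvar : ℕ → Proc
  | par : Proc → Proc → Proc
  | inp : Name → Proc → Proc
  | out : Name → Proc → Proc
  deriving DecidableEq

namespace Proc

/-- Shift the free de Bruijn indices `≥ k` by `d`. -/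
def lift (d : ℕ) : ℕ → Proc → Proc
  | _, nil => nil
  | k, pvar n => if n < k then pvar n else pvar (n + d)
  | k, par P Q => par (lift d k P) (lift d k Q)
  | k, inp a P => inp a (lift d (k + 1) P)
  | k, out a P => out a (lift d k P)

/-- Capture-avoiding substitution of `S` for the de Bruijn index `k` in `P`. -/
def subst : Proc → ℕ → Proc → Proc
  | nil, _, _ => nil
  | pvar n, k, S => if n = k then lift k 0 S else if k < n then pvar (n - 1) else pvar n
  | par P Q, k, S => par (subst P k S) (subst Q k S)
  | inp a P, k, S => inp a (subst P (k + 1) S)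
  | out a P, k, S => out a (subst P k S)

/-- Free channel names of a process. -/
def fnames : Proc → Finset Name
  | nil => ∅
  | pvar _ => ∅
  | par P Q => fnames P ∪ fnames Q
  | inp a P => insert a (fnames P)
  | out a P => insert a (fnames P)

end Proc

/-- Labels of the HOcore LTS: internal step, output, input. -/
inductive Label
  | tau : Label
  | outl : Name → Proc → Label
  | inl : Name → Proc → Label

/-- Structural congruence: parallel composition is associative, commutative,
and has `nil` as a neutral element. -/
inductive SCong : Proc → Proc → Prop
  | refl (P) : SCong P P
  | symm {P Q} : SCong P Q → SCong Q P
  | trans {P Q R} : SCong P Q → SCong Q R → SCong P R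
  | parComm (P Q) : SCong (.par P Q) (.par Q P)
  | parAssoc (P Q R) : SCong (.par (.par P Q) R) (.par P (.par Q R))
  | parNil (P) : SCong (.par P .nil) P
  | parCong {P P' Q Q'} : SCong P P' → SCong Q Q' → SCong (.par P Q) (.par P' Q')
  | inpCong {P P'} (a) : SCong P P' → SCong (.inp a P) (.inp a P')
  | outCong {P P'} (a) : SCong P P' → SCong (.out a P) (.out a P')

/-- The labeled transition system of HOcore (processes are considered up to
structural congruence). -/
inductive Step : Proc → Label → Proc → Prop
  | outS (a P) : Step (.out a P) (.outl a P) .nil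
  | inpS (a Q P) : Step (.inp a Q) (.inl a P) (Q.subst 0 P)
  | parL {P l P'} (Q) : Step P l P' → Step (.par P Q) l (.par P' Q)
  | parR {Q l Q'} (P) : Step Q l Q' → Step (.par P Q) l (.par P Q')
  | comm1 {P Q P' Q' a R} : Step P (.outl a R) P' → Step Q (.inl a R) Q' →
      Step (.par P Q) .tau (.par P' Q')
  | comm2 {P Q P' Q' a R} : Step P (.inl a R) P' → Step Q (.outl a R) Q' →
      Step (.par P Q) .tau (.par P' Q')
  | struct {P P' l Q Q'} : SCong P P' → Step P' l Q' → SCong Q' Q → Step P l Q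

/-- One internal step. -/
def TauStep (P Q : Proc) : Prop := Step P Label.tau Q

/-- Weak internal transition `==tau==>`. -/
def WTau : Proc → Proc → Prop := Relation.ReflTransGen TauStep

/-- Observables: input on a name, or output on a name (a coname). -/
inductive Barb
  | inb : Name → Barb
  | outb : Name → Barb
  deriving DecidableEq

/-- Strong observable action w.r.t. a set `H` of hidden names. -/
def StrongBarb (H : Set Name) (P : Proc) : Barb → Prop
  | .inb a => a ∉ H ∧ ∃ Q R, Step P (Label.inl a Q) R
  | .outb a => a ∉ H ∧ ∃ Q R, Step P (Label.outl a Q) R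

/-- Weak observable action w.r.t. a set `H` of hidden names. -/
def WeakBarb (H : Set Name) (P : Proc) (α : Barb) : Prop :=
  ∃ P', WTau P P' ∧ StrongBarb H P' α

/-- Barbed bisimulation w.r.t. the hidden names `H`. -/
def IsBarbedBisim (H : Set Name) (R : Proc → Proc → Prop) : Prop :=
  Symmetric R ∧ ∀ P Q, R P Q →
    (∀ α, StrongBarb H P α → WeakBarb H Q α) ∧
    (∀ S : Proc, ((S.fnames : Set Name) ∩ H = ∅) → R (.par P S) (.par Q S)) ∧
    (∀ P', Step P Label.tau P' → ∃ Q', WTau Q Q' ∧ R P' Q')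

/-- Barbed equivalence w.r.t. the hidden names `H`. -/
def BarbedEquiv (H : Set Name) (P Q : Proc) : Prop :=
  ∃ R, IsBarbedBisim H R ∧ R P Q
/-! ### Open call-by-name lambda-terms (free variables are natural numbers)
and the KAM -/

/-- Lambda-terms: free variables `fvar f` (natural numbers) and bound variables
in de Bruijn representation. -/
inductive Term
  | fvar : ℕ → Term
  | bvar : ℕ → Term
  | lam : Term → Term
  | app : Term → Term → Term
  deriving DecidableEq

namespace Term

/-- Shift the de Bruijn indices `≥ k` by `d`. -/
def liftT (d : ℕ) : ℕ → Term → Term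
  | _, fvar f => fvar f
  | k, bvar n => if n < k then bvar n else bvar (n + d)
  | k, lam t => lam (liftT d (k + 1) t)
  | k, app t s => app (liftT d k t) (liftT d k s)

/-- Capture-avoiding substitution of `s` for the de Bruijn index `k`. -/
def substT : Term → ℕ → Term → Term
  | fvar f, _, _ => fvar f
  | bvar n, k, s => if n = k then liftT k 0 s else if k < n then bvar (n - 1) else bvar n
  | lam t, k, s => lam (substT t (k + 1) s)
  | app t u, k, s => app (substT t k s) (substT u k s)

/-- Free variables of a term. -/
def fv : Term → Finset ℕ
  | fvar f => {f}
  | bvar _ => ∅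
  | lam t => fv t
  | app t s => fv t ∪ fv s

end Term

/-- Stacks of the KAM. -/
inductive Stack
  | nil : Stack
  | cons : Term → Stack → Stack

/-- Configurations of the KAM. -/
structure KConf where
  t : Term
  π : Stack

/-- Transitions of the KAM. -/
inductive KStep : KConf → KConf → Prop
  | push {t s π} : KStep ⟨.app t s, π⟩ ⟨t, .cons s π⟩
  | grab {t s π} : KStep ⟨.lam t, .cons s π⟩ ⟨t.substT 0 s, π⟩

/-- Reflexive-transitive closure of KAM transitions. -/
def KSteps : KConf → KConf → Prop := Relation.ReflTransGen KStep
/-! ### The NFB machine -/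

/-- Flags of the NFB machine: `lam`, `done`, `enter`, `skip` and free variables
(natural numbers). -/
inductive NFlag
  | flam | fdone | fenter | fskip
  | fvarF : ℕ → NFlag
  deriving DecidableEq

/-- Labels of the NFB machine: `tau` or a flag. -/
inductive MLabel
  | tau : MLabel
  | flag : NFlag → MLabel

/-- Configurations of the NFB machine: evaluation mode `<t | π | n>_ev` and
continuation mode `<π | n>_cont`. -/
inductive NConf
  | ev : Term → Stack → ℕ → NConf
  | cont : Stack → ℕ → NConf

/-- Labeled transitions of the NFB machine. -/
inductive NStep : NConf → MLabel → NConf → Prop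
  | push {t s π n} : NStep (.ev (.app t s) π n) .tau (.ev t (.cons s π) n)
  | grab {t s π n} : NStep (.ev (.lam t) (.cons s π) n) .tau (.ev (t.substT 0 s) π n)
  | lambda {t n} : NStep (.ev (.lam t) .nil n) (.flag .flam)
      (.ev (t.substT 0 (.fvar n)) .nil (n + 1))
  | var {f π n} : NStep (.ev (.fvar f) π n) (.flag (.fvarF f)) (.cont π n)
  | enter {t π n} : NStep (.cont (.cons t π) n) (.flag .fenter) (.ev t .nil n)
  | skip {t π n} : NStep (.cont (.cons t π) n) (.flag .fskip) (.cont π n)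

/-- Terminating flagged transitions of the NFB machine (no target configuration). -/
inductive NFinal : NConf → NFlag → Prop
  | done {n} : NFinal (.cont .nil n) .fdone

/-- Silent transitions of the NFB machine. -/
def NTau (C C' : NConf) : Prop := NStep C .tau C'

/-- Flagged transitions of the NFB machine. -/
def NFlagStep (C : NConf) (F : NFlag) (C' : NConf) : Prop := NStep C (.flag F) C'
/-! ### Translation of the NFB machine into HOcore -/

def hdN : Name := 0
def cN : Name := 1
def bN : Name := 2
def kN : Name := 3
def sucN : Name := 4
def zN : Name := 5
def initN : Name := 6
def recN : Name := 7
def chN : Name := 8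
def lamN : Name := 9
def enterN : Name := 10
def skipN : Name := 11
def doneN : Name := 12

/-- Translation of the empty stack: `[[ [] ]] = b(x).x`. -/
def trMt : Proc := .inp bN (.pvar 0)

/-- Translation `<<f>>` of a free variable (also used for the counter):
`<<0>> = z(_).init!<0>` and `<<f+1>> = suc(_).<<f>>`. -/
def trFV : ℕ → Proc
  | 0 => .inp zN (.out initN .nil)
  | f + 1 => .inp sucN (trFV f)

/-- `Restart = lam(_).k(x).(hd!<x> || k!<suc(_).x> || c!<[[ [] ]]> || b!<0>)`. -/
def Restart : Proc :=
  .inp lamN (.inp kN (.par (.out hdN (.pvar 0))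
    (.par (.out kN (.inp sucN (.pvar 1)))
      (.par (.out cN trMt) (.out bN .nil)))))

/-- Internal choice `P + Q = ch!<P> || ch!<Q> || ch(x).ch(_).x`. -/
def choicePlus (P Q : Proc) : Proc :=
  .par (.out chN P) (.par (.out chN Q) (.inp chN (.inp chN (.pvar 1))))

/-- `Choice(P) = enter(_).c(_).(P || c!<[[ [] ]]>) + skip(_).init!<0>`. -/
def Choice (P : Proc) : Proc :=
  choicePlus (.inp enterN (.inp cN (.par (P.lift 2 0) (.out cN trMt))))
    (.inp skipN (.out initN .nil))

/-- `Cont = c(p).(p || b!<done(_).0> || hd(x).b(_).Choice(x))`. -/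
def ContP : Proc :=
  .inp cN (.par (.pvar 0)
    (.par (.out bN (.inp doneN .nil))
      (.inp hdN (.inp bN (Choice (.pvar 1))))))

/-- `Rec = init(_).rec(x).(x || rec!<x> || Cont)`. -/
def RecP : Proc :=
  .inp initN (.inp recN (.par (.pvar 0) (.par (.out recN (.pvar 0)) ContP)))

/-- Translation of NFB terms into HOcore. -/
def trTN : Term → Proc
  | .fvar f => trFV f
  | .bvar n => .pvar n
  | .app t s =>
      .inp cN (.par ((trTN t).lift 1 0)
        (.out cN (.par (.out hdN ((trTN s).lift 1 0)) (.out cN (.pvar 0)))))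
  | .lam t =>
      .inp cN (.par (.pvar 0)
        (.par (.out bN Restart)
          (.inp hdN (.inp bN (((trTN t).lift 1 0).lift 1 2)))))

/-- Translation of stacks. -/
def trStkN : Stack → Proc
  | .nil => trMt
  | .cons t π => .par (.out hdN (trTN t)) (.out cN (trStkN π))

/-- Translation of NFB machine configurations. -/
def trNConf : NConf → Proc
  | .ev t π n =>
      .par (trTN t) (.par (.out cN (trStkN π))
        (.par (.out kN (trFV n)) (.par RecP (.out recN RecP))))
  | .cont π n =>
      .par (.out cN (trStkN π)) (.par (.out kN (trFV n))
        (.par ContP (.par RecP (.out recN RecP))))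

/-- A machine process is a weak tau-derivative of a translated configuration. -/
def MachineProc (P : Proc) : Prop := ∃ C : NConf, WTau (trNConf C) P

/-- The flag names. -/
def FlagNames : Set Name := {lamN, enterN, skipN, doneN, sucN, zN}

/-- The hidden names: names of the translation that are not flag names. -/
def HSet : Set Name := {hdN, cN, bN, kN, initN, recN, chN}

/-- Weak observable actions of a process w.r.t. `HSet`. -/
def WkObs (P : Proc) : Set Barb := {α | WeakBarb HSet P α}

/-- The choice process reachable from `[[<t::π | n>_cont]]`. -/
def ChoiceConfig (t : Term) (π : Stack) (n : ℕ) : Proc :=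
  .par (Choice (trTN t)) (.par (.out cN (trStkN π))
    (.par (.out kN (trFV n)) (.par RecP (.out recN RecP))))

/-- Choice processes (up to structural congruence). -/
def IsChoiceProc (P : Proc) : Prop :=
  ∃ t π n, SCong P (ChoiceConfig t π n) ∧ WTau (trNConf (.cont (.cons t π) n)) P

/-- An input transition on the name `a`. -/
def inpStep (a : Name) (P Q : Proc) : Prop := ∃ R, Step P (Label.inl a R) Q

/-- `n` successive input transitions on `suc`. -/
def sucSeq : ℕ → Proc → Proc → Prop
  | 0, P, Q => P = Q
  | f + 1, P, Q => ∃ P', inpStep sucN P P' ∧ sucSeq f P' Q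

/-- Process-level transition corresponding to a machine flag: a transition on
the corresponding flag name; for a free variable `f`, `f` transitions on `suc`
followed by one on `z`. -/
def FlagStepP : NFlag → Proc → Proc → Prop
  | .flam => inpStep lamN
  | .fenter => inpStep enterN
  | .fskip => inpStep skipN
  | .fdone => inpStep doneN
  | .fvarF f => fun P Q => ∃ P', sucSeq f P P' ∧ inpStep zN P' Q

/-- Process-level transition for a machine label (`tau` or a flag). -/
def MLStepP : MLabel → Proc → Proc → Prop
  | .tau => fun P Q => Step P Label.tau Q
  | .flag F => FlagStepP F

/-- Weak process-level machine-labeled transition. -/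
def WMLStepP (l : MLabel) (P Q : Proc) : Prop :=
  ∃ P1 P2, WTau P P1 ∧ MLStepP l P1 P2 ∧ WTau P2 Q

/-! ### Auxiliary machinery for Statement 6 -/

namespace Proc

/-- Output names of a process: names occurring under an output prefix. -/
def onames : Proc → Finset Name
  | nil => ∅
  | pvar _ => ∅
  | par P Q => onames P ∪ onames Q
  | inp _ P => onames P
  | out a P => insert a (onames P)

lemma fnames_lift (d : ℕ) : ∀ (P : Proc) (k : ℕ), (Proc.lift d k P).fnames = P.fnames := by
  intro P
  induction P with
  | nil => intro k; rfl
  | pvar n => intro k; simp only [Proc.lift]; split <;> rfl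
  | par P Q ihP ihQ => intro k; simp [Proc.lift, Proc.fnames, ihP, ihQ]
  | inp a P ih => intro k; simp [Proc.lift, Proc.fnames, ih]
  | out a P ih => intro k; simp [Proc.lift, Proc.fnames, ih]

lemma onames_lift (d : ℕ) : ∀ (P : Proc) (k : ℕ), onames (Proc.lift d k P) = onames P := by
  intro P
  induction P with
  | nil => intro k; rfl
  | pvar n => intro k; simp only [Proc.lift]; split <;> rfl
  | par P Q ihP ihQ => intro k; simp [Proc.lift, onames, ihP, ihQ]
  | inp a P ih => intro k; simp [Proc.lift, onames, ih]
  | out a P ih => intro k; simp [Proc.lift, onames, ih]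

lemma fnames_subst : ∀ (P : Proc) (k : ℕ) (S : Proc),
    (P.subst k S).fnames ⊆ P.fnames ∪ S.fnames := by
  intro P
  induction P with
  | nil => intro k S; simp [Proc.subst, Proc.fnames]
  | pvar n =>
    intro k S
    simp only [Proc.subst]
    split
    · rw [fnames_lift]; simp [Proc.fnames]
    · split <;> simp [Proc.fnames]
  | par P Q ihP ihQ =>
    intro k S
    simp only [Proc.subst, Proc.fnames]
    intro x hx
    rcases Finset.mem_union.1 hx with h | h
    · have := ihP k S h; simp [Proc.fnames] at this ⊢; tauto
    · have := ihQ k S h; simp [Proc.fnames] at this ⊢; tauto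
  | inp a P ih =>
    intro k S
    simp only [Proc.subst, Proc.fnames]
    intro x hx
    rcases Finset.mem_insert.1 hx with h | h
    · simp [Proc.fnames, h]
    · have := ih (k+1) S h; simp [Proc.fnames] at this ⊢; tauto
  | out a P ih =>
    intro k S
    simp only [Proc.subst, Proc.fnames]
    intro x hx
    rcases Finset.mem_insert.1 hx with h | h
    · simp [Proc.fnames, h]
    · have := ih k S h; simp [Proc.fnames] at this ⊢; tauto

lemma onames_subst : ∀ (P : Proc) (k : ℕ) (S : Proc),
    onames (P.subst k S) ⊆ onames P ∪ onames S := by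
  intro P
  induction P with
  | nil => intro k S; simp [Proc.subst, onames]
  | pvar n =>
    intro k S
    simp only [Proc.subst]
    split
    · rw [onames_lift]; simp [onames]
    · split <;> simp [onames]
  | par P Q ihP ihQ =>
    intro k S
    simp only [Proc.subst, onames]
    intro x hx
    rcases Finset.mem_union.1 hx with h | h
    · have := ihP k S h; simp [onames] at this ⊢; tauto
    · have := ihQ k S h; simp [onames] at this ⊢; tauto
  | inp a P ih =>
    intro k S
    simp only [Proc.subst, onames]
    exact ih (k+1) S
  | out a P ih =>
    intro k S
    simp only [Proc.subst, onames]
    intro x hx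
    rcases Finset.mem_insert.1 hx with h | h
    · simp [onames, h]
    · have := ih k S h; simp [onames] at this ⊢; tauto

end Proc

lemma scong_names {P Q : Proc} (h : SCong P Q) :
    P.fnames = Q.fnames ∧ Proc.onames P = Proc.onames Q := by
  induction h with
  | refl P => exact ⟨rfl, rfl⟩
  | symm _ ih => exact ⟨ih.1.symm, ih.2.symm⟩
  | trans _ _ ih1 ih2 => exact ⟨ih1.1.trans ih2.1, ih1.2.trans ih2.2⟩
  | parComm P Q => constructor <;> simp [Proc.fnames, Proc.onames, Finset.union_comm]
  | parAssoc P Q R => constructor <;> simp [Proc.fnames, Proc.onames, Finset.union_assoc]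
  | parNil P => constructor <;> simp [Proc.fnames, Proc.onames]
  | parCong _ _ ih1 ih2 => constructor <;> simp [Proc.fnames, Proc.onames, ih1.1, ih1.2, ih2.1, ih2.2]
  | inpCong a _ ih => constructor <;> simp [Proc.fnames, Proc.onames, ih.1, ih.2]
  | outCong a _ ih => constructor <;> simp [Proc.fnames, Proc.onames, ih.1, ih.2]

lemma step_names {P : Proc} {l : Label} {P' : Proc} (h : Step P l P') :
    match l with
    | .tau => P'.fnames ⊆ P.fnames ∧ Proc.onames P' ⊆ Proc.onames P
    | .outl a R => a ∈ Proc.onames P ∧ P'.fnames ∪ R.fnames ⊆ P.fnames ∧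
        Proc.onames P' ∪ Proc.onames R ⊆ Proc.onames P
    | .inl a R => a ∈ P.fnames ∧ P'.fnames ⊆ P.fnames ∪ R.fnames ∧
        Proc.onames P' ⊆ Proc.onames P ∪ Proc.onames R := by
  induction h with
  | outS a P =>
    simp only [Proc.fnames, Proc.onames, Finset.subset_iff, Finset.mem_union,
      Finset.mem_insert, Finset.notMem_empty]
    aesop
  | inpS a Q P =>
    refine ⟨by simp [Proc.fnames], ?_, ?_⟩
    · refine (Proc.fnames_subst Q 0 P).trans ?_
      simp only [Proc.fnames, Finset.subset_iff, Finset.mem_union, Finset.mem_insert]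
      tauto
    · exact Proc.onames_subst Q 0 P
  | parL Q hstep ih =>
    rename_i l _
    cases l with
    | tau =>
      simp only [Proc.fnames, Proc.onames, Finset.subset_iff, Finset.mem_union] at ih ⊢
      aesop
    | outl a R =>
      simp only [Proc.fnames, Proc.onames, Finset.subset_iff, Finset.mem_union] at ih ⊢
      aesop
    | inl a R =>
      simp only [Proc.fnames, Proc.onames, Finset.subset_iff, Finset.mem_union] at ih ⊢
      obtain ⟨h1, h2, h3⟩ := ih
      refine ⟨Or.inl h1, fun x hx => ?_, fun x hx => ?_⟩
      · rcases hx with hx | hx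
        · rcases h2 hx with h | h
          · exact Or.inl (Or.inl h)
          · exact Or.inr h
        · exact Or.inl (Or.inr hx)
      · rcases hx with hx | hx
        · rcases h3 hx with h | h
          · exact Or.inl (Or.inl h)
          · exact Or.inr h
        · exact Or.inl (Or.inr hx)
  | parR P hstep ih =>
    rename_i l _
    cases l with
    | tau =>
      simp only [Proc.fnames, Proc.onames, Finset.subset_iff, Finset.mem_union] at ih ⊢
      aesop
    | outl a R =>
      simp only [Proc.fnames, Proc.onames, Finset.subset_iff, Finset.mem_union] at ih ⊢
      aesop
    | inl a R =>
      simp only [Proc.fnames, Proc.onames, Finset.subset_iff, Finset.mem_union] at ih ⊢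
      obtain ⟨h1, h2, h3⟩ := ih
      refine ⟨Or.inr h1, fun x hx => ?_, fun x hx => ?_⟩
      · rcases hx with hx | hx
        · exact Or.inl (Or.inl hx)
        · rcases h2 hx with h | h
          · exact Or.inl (Or.inr h)
          · exact Or.inr h
      · rcases hx with hx | hx
        · exact Or.inl (Or.inl hx)
        · rcases h3 hx with h | h
          · exact Or.inl (Or.inr h)
          · exact Or.inr h
  | comm1 h1 h2 ih1 ih2 =>
    simp only [Proc.fnames, Proc.onames, Finset.subset_iff, Finset.mem_union] at ih1 ih2 ⊢
    obtain ⟨-, hh2, hh3⟩ := ih1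
    obtain ⟨-, g2, g3⟩ := ih2
    refine ⟨fun x hx => ?_, fun x hx => ?_⟩
    · rcases hx with hx | hx
      · exact Or.inl (hh2 (Or.inl hx))
      · rcases g2 hx with h | h
        · exact Or.inr h
        · exact Or.inl (hh2 (Or.inr h))
    · rcases hx with hx | hx
      · exact Or.inl (hh3 (Or.inl hx))
      · rcases g3 hx with h | h
        · exact Or.inr h
        · exact Or.inl (hh3 (Or.inr h))
  | comm2 h1 h2 ih1 ih2 =>
    simp only [Proc.fnames, Proc.onames, Finset.subset_iff, Finset.mem_union] at ih1 ih2 ⊢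
    obtain ⟨-, hh2, hh3⟩ := ih1
    obtain ⟨-, g2, g3⟩ := ih2
    refine ⟨fun x hx => ?_, fun x hx => ?_⟩
    · rcases hx with hx | hx
      · rcases hh2 hx with h | h
        · exact Or.inl h
        · exact Or.inr (g2 (Or.inr h))
      · exact Or.inr (g2 (Or.inl hx))
    · rcases hx with hx | hx
      · rcases hh3 hx with h | h
        · exact Or.inl h
        · exact Or.inr (g3 (Or.inr h))
      · exact Or.inr (g3 (Or.inl hx))
  | struct hs1 hstep hs2 ih =>
    rename_i P P' l Q Q'
    obtain ⟨e1f, e1o⟩ := scong_names hs1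
    obtain ⟨e2f, e2o⟩ := scong_names hs2
    cases l with
    | tau =>
      exact ⟨e2f ▸ e1f ▸ ih.1, e2o ▸ e1o ▸ ih.2⟩
    | outl a R =>
      exact ⟨e1o ▸ ih.1, e2f ▸ e1f ▸ ih.2.1, e2o ▸ e1o ▸ ih.2.2⟩
    | inl a R =>
      exact ⟨e1f ▸ ih.1, e2f ▸ e1f ▸ ih.2.1, e2o ▸ e1o ▸ ih.2.2⟩

/-- All names that may occur in a machine process. -/
def AFin : Finset Name :=
  {hdN, cN, bN, kN, initN, recN, chN, lamN, enterN, skipN, doneN, sucN, zN}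

/-- The hidden names, as a finset. -/
def HFin : Finset Name := {hdN, cN, bN, kN, initN, recN, chN}

/-- Invariant: all free names are translation names, all output names are hidden. -/
def Good (P : Proc) : Prop := P.fnames ⊆ AFin ∧ Proc.onames P ⊆ HFin

lemma good_nil : Good .nil := by constructor <;> decide

lemma good_pvar (n : ℕ) : Good (.pvar n) := by constructor <;> simp [Proc.fnames, Proc.onames]

lemma good_par {P Q : Proc} (hP : Good P) (hQ : Good Q) : Good (.par P Q) :=
  ⟨by simpa [Proc.fnames, Finset.union_subset_iff] using ⟨hP.1, hQ.1⟩,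
   by simpa [Proc.onames, Finset.union_subset_iff] using ⟨hP.2, hQ.2⟩⟩

lemma good_inp {a : Name} {P : Proc} (ha : a ∈ AFin) (hP : Good P) : Good (.inp a P) :=
  ⟨by simpa [Proc.fnames, Finset.insert_subset_iff] using ⟨ha, hP.1⟩,
   by simpa [Proc.onames] using hP.2⟩

lemma hfin_sub_afin : HFin ⊆ AFin := by decide

lemma good_out {a : Name} {P : Proc} (ha : a ∈ HFin) (hP : Good P) : Good (.out a P) :=
  ⟨by simpa [Proc.fnames, Finset.insert_subset_iff] using ⟨hfin_sub_afin ha, hP.1⟩,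
   by simpa [Proc.onames, Finset.insert_subset_iff] using ⟨ha, hP.2⟩⟩

lemma good_lift {P : Proc} (hP : Good P) (d k : ℕ) : Good (Proc.lift d k P) :=
  ⟨by rw [Proc.fnames_lift]; exact hP.1, by rw [Proc.onames_lift]; exact hP.2⟩

lemma good_tau {P P' : Proc} (h : Step P .tau P') (hg : Good P) : Good P' := by
  have m := step_names h
  exact ⟨m.1.trans hg.1, m.2.trans hg.2⟩

lemma good_wtau {P Q : Proc} (hg : Good P) (h : WTau P Q) : Good Q := by
  induction h with
  | refl => exact hg
  | tail _ hstep ih => exact good_tau hstep ih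

lemma good_trFV (f : ℕ) : Good (trFV f) := by
  induction f with
  | zero => constructor <;> decide
  | succ f ih => exact good_inp (by decide) ih

lemma good_trMt : Good trMt := by constructor <;> decide

lemma good_Restart : Good Restart := by constructor <;> decide

lemma good_Choice {P : Proc} (hP : Good P) : Good (Choice P) := by
  refine good_par (good_out (by decide) ?_) (good_par (good_out (by decide) ?_)
    (good_inp (by decide) (good_inp (by decide) (good_pvar 1))))
  · exact good_inp (by decide) (good_inp (by decide)
      (good_par (good_lift hP 2 0) (good_out (by decide) good_trMt)))
  · exact good_inp (by decide) (good_out (by decide) good_nil)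

lemma good_ContP : Good ContP := by
  refine good_inp (by decide) (good_par (good_pvar 0) (good_par
    (good_out (by decide) (good_inp (by decide) good_nil))
    (good_inp (by decide) (good_inp (by decide) (good_Choice (good_pvar 1))))))

lemma good_RecP : Good RecP := by constructor <;> decide

lemma good_trTN (t : Term) : Good (trTN t) := by
  induction t with
  | fvar f => exact good_trFV f
  | bvar n => exact good_pvar n
  | lam t ih =>
    exact good_inp (by decide) (good_par (good_pvar 0) (good_par
      (good_out (by decide) good_Restart)
      (good_inp (by decide) (good_inp (by decide) (good_lift (good_lift ih 1 0) 1 2)))))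
  | app t s iht ihs =>
    exact good_inp (by decide) (good_par (good_lift iht 1 0)
      (good_out (by decide) (good_par (good_out (by decide) (good_lift ihs 1 0))
        (good_out (by decide) (good_pvar 0)))))

lemma good_trStkN (π : Stack) : Good (trStkN π) := by
  induction π with
  | nil => exact good_trMt
  | cons t π ih =>
    exact good_par (good_out (by decide) (good_trTN t)) (good_out (by decide) ih)

lemma good_trNConf (C : NConf) : Good (trNConf C) := by
  cases C with
  | ev t π n =>
    exact good_par (good_trTN t) (good_par (good_out (by decide) (good_trStkN π))
      (good_par (good_out (by decide) (good_trFV n))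
        (good_par good_RecP (good_out (by decide) good_RecP))))
  | cont π n =>
    exact good_par (good_out (by decide) (good_trStkN π))
      (good_par (good_out (by decide) (good_trFV n))
        (good_par good_ContP (good_par good_RecP (good_out (by decide) good_RecP))))

/-! ### Statement 6: weak observables of machine processes are flag names -/

/-! ### Statement 6: weak observables of machine processes are flag names -/

/-- Every machine process only has the flag names `lam`, `enter`, `skip`, `done`,
`suc`, `z` as weak observable actions; in particular it has no weak barb on a
coname. -/
theorem machine_process_weak_observables (P : Proc) (hP : MachineProc P) :
    WkObs P ⊆ ({.inb lamN, .inb enterN, .inb skipN, .inb doneN, .inb sucN, .inb zN} :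
        Set Barb) ∧
    ∀ a : Name, Barb.outb a ∉ WkObs P := by
  obtain ⟨C, hC⟩ := hP
  have hg : Good P := good_wtau (good_trNConf C) hC
  constructor
  · intro α hα
    obtain ⟨P', hw, hb⟩ := hα
    have hg' : Good P' := good_wtau hg hw
    cases α with
    | inb a =>
      obtain ⟨hnH, Q, R, hstep⟩ := hb
      have hm : a ∈ P'.fnames := (step_names hstep).1
      have ha : a ∈ AFin := hg'.1 hm
      simp only [AFin, HSet, hdN, cN, bN, kN, sucN, zN, initN, recN, chN, lamN, enterN,
        skipN, doneN, Finset.mem_insert, Finset.mem_singleton, Set.mem_insert_iff,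
        Set.mem_singleton_iff, not_or] at ha hnH
      simp only [Set.mem_insert_iff, Set.mem_singleton_iff, Barb.inb.injEq, lamN, enterN,
        skipN, doneN, sucN, zN]
      tauto
    | outb a =>
      obtain ⟨hnH, Q, R, hstep⟩ := hb
      have hm : a ∈ Proc.onames P' := (step_names hstep).1
      have ha : a ∈ HFin := hg'.2 hm
      exfalso
      apply hnH
      simp only [HFin, HSet, hdN, cN, bN, kN, initN, recN, chN, Finset.mem_insert,
        Finset.mem_singleton] at ha
      simp only [HSet, hdN, cN, bN, kN, initN, recN, chN, Set.mem_insert_iff,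
        Set.mem_singleton_iff]
      tauto
  · intro a hα
    obtain ⟨P', hw, hb⟩ := hα
    have hg' : Good P' := good_wtau hg hw
    obtain ⟨hnH, Q, R, hstep⟩ := hb
    have hm : a ∈ Proc.onames P' := (step_names hstep).1
    have ha : a ∈ HFin := hg'.2 hm
    apply hnH
    simp only [HFin, HSet, hdN, cN, bN, kN, initN, recN, chN, Finset.mem_insert,
      Finset.mem_singleton] at ha
    simp only [HSet, hdN, cN, bN, kN, initN, recN, chN, Set.mem_insert_iff,
      Set.mem_singleton_iff]
    tauto
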